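/- arXiv:1011.3698 — 4 statements merged into one kernel-verified Lean document; each statement's English description precedes it below -/
import Mathlib

section
/- Let M be a linearly ordered set and for finite subsets H, J of M define α(H,J) = (-1)^{|{(i,j) ∈ H × J : j < i}|} (an integer equal to ±1). Then for all finite subsets H, J, K of M one has α(H,J) · α(H Δ J, K) = α(H, J Δ K) · α(J,K), where Δ denotes symmetric difference of sets. -/
private lemma sum_symmDiff_parity {M : Type*} [DecidableEq M] (f : M → ℕ) (A B : Finset M) :
    (-1 : ℤ) ^ (∑ i ∈ symmDiff A B, f i) =
      (-1 : ℤ) ^ (∑ i ∈ A, f i) * (-1 : ℤ) ^ (∑ i ∈ B, f i) := by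
  have hdisj : Disjoint (symmDiff A B) (A ∩ B) := by
    rw [Finset.disjoint_left]
    intro a ha hb
    simp only [Finset.mem_inter] at hb
    simp [Finset.mem_symmDiff, hb.1, hb.2] at ha
  have hunion : symmDiff A B ∪ (A ∩ B) = A ∪ B := by
    ext a; simp [Finset.mem_symmDiff]; tauto
  have h1 : ∑ i ∈ A, f i + ∑ i ∈ B, f i
      = ∑ i ∈ symmDiff A B, f i + 2 * ∑ i ∈ A ∩ B, f i := by
    rw [← Finset.sum_union_inter, ← hunion, Finset.sum_union hdisj]
    ring
  rw [← pow_add, h1, pow_add, pow_mul]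
  norm_num

private lemma card_left {M : Type*} [LinearOrder M] (A B : Finset M) :
    ((A ×ˢ B).filter (fun p => p.2 < p.1)).card
      = ∑ i ∈ A, (B.filter (fun j => j < i)).card := by
  rw [Finset.card_filter, Finset.sum_product]
  exact Finset.sum_congr rfl fun i _ => (Finset.card_filter _ _).symm

private lemma card_right {M : Type*} [LinearOrder M] (A B : Finset M) :
    ((A ×ˢ B).filter (fun p => p.2 < p.1)).card
      = ∑ j ∈ B, (A.filter (fun i => j < i)).card := by
  rw [Finset.card_filter, Finset.sum_product_right]
  exact Finset.sum_congr rfl fun j _ => (Finset.card_filter _ _).symm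

/-- For a linearly ordered set `M` and finite subsets `H J : Finset M`,
let `α H J = (-1)^{#{(i,j) ∈ H × J : j < i}}`. Then
`α H J * α (H ∆ J) K = α H (J ∆ K) * α J K`. -/
theorem alpha_cocycle {M : Type*} [LinearOrder M]
    (α : Finset M → Finset M → ℤ)
    (hα : ∀ H J : Finset M,
      α H J = (-1 : ℤ) ^ ((H ×ˢ J).filter (fun p => p.2 < p.1)).card)
    (H J K : Finset M) :
    α H J * α (symmDiff H J) K = α H (symmDiff J K) * α J K := by
  simp only [hα]
  rw [card_left (symmDiff H J) K, sum_symmDiff_parity, ← card_left H K, ← card_left J K,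
    card_right H (symmDiff J K), sum_symmDiff_parity, ← card_right H J, ← card_right H K]
  ring
end

section
/- Let R be a commutative ring, M a linearly ordered set, and q : M → R a function. For finite subsets H, J of M define σ(H,J) = α(H,J) · β(H,J) ∈ R, where α(H,J) = (-1)^{|{(i,j) ∈ H × J : j < i}|} and β(H,J) = ∏_{i ∈ H ∩ J} q(i). Then for all finite subsets H, J, K of M one has σ(H,J) · σ(H Δ J, K) = σ(H, J Δ K) · σ(J,K). (This is the associativity cocycle identity for the structure constants of the Clifford algebra constructed on the basis (e_K) indexed by finite subsets K of M, with product e_H e_J = σ(H,J) e_{H Δ J}.) -/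
lemma card_symmDiff_parity' {M : Type*} [DecidableEq M] (s t : Finset M) :
    (symmDiff s t).card % 2 = (s.card + t.card) % 2 := by
  have h1 : symmDiff s t = (s ∪ t) \ (s ∩ t) := by
    ext x; simp [Finset.mem_symmDiff]; tauto
  have h2 : (s ∩ t) ⊆ (s ∪ t) := (Finset.inter_subset_left).trans Finset.subset_union_left
  have h3 := Finset.card_sdiff_of_subset h2
  have h4 := Finset.card_union_add_card_inter s t
  have h5 := Finset.card_le_card h2
  rw [h1]
  omega

lemma neg_one_pow_parity' {R : Type*} [Monoid R] [HasDistribNeg R] (m n : ℕ)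
    (h : m % 2 = n % 2) : (-1 : R) ^ m = (-1) ^ n := by
  conv_lhs => rw [← Nat.div_add_mod m 2]
  conv_rhs => rw [← Nat.div_add_mod n 2]
  rw [pow_add, pow_add, pow_mul, pow_mul, h]
  norm_num

lemma filter_symmDiff' {α : Type*} [DecidableEq α] (p : α → Prop) [DecidablePred p]
    (s t : Finset α) :
    (symmDiff s t).filter p = symmDiff (s.filter p) (t.filter p) := by
  ext x
  simp [Finset.mem_symmDiff, Finset.mem_filter]
  tauto

section
variable {M : Type*} [LinearOrder M]

/-- the inversion count -/
noncomputable def nInv (A B : Finset M) : ℕ :=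
  ((A ×ˢ B).filter (fun p => p.2 < p.1)).card

lemma nInv_def (A B : Finset M) :
    ((A ×ˢ B).filter (fun p => p.2 < p.1)).card = nInv A B := rfl

lemma symmDiff_product_left (A B C : Finset M) :
    (symmDiff A B) ×ˢ C = symmDiff (A ×ˢ C) (B ×ˢ C) := by
  ext ⟨i, j⟩
  simp [Finset.mem_symmDiff, Finset.mem_product]
  tauto

lemma symmDiff_product_right (A B C : Finset M) :
    A ×ˢ (symmDiff B C) = symmDiff (A ×ˢ B) (A ×ˢ C) := by
  ext ⟨i, j⟩
  simp [Finset.mem_symmDiff, Finset.mem_product]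
  tauto

lemma nInv_symmDiff_left (A B C : Finset M) :
    nInv (symmDiff A B) C % 2 = (nInv A C + nInv B C) % 2 := by
  rw [nInv, symmDiff_product_left, filter_symmDiff', card_symmDiff_parity']
  rfl

lemma nInv_symmDiff_right (A B C : Finset M) :
    nInv A (symmDiff B C) % 2 = (nInv A B + nInv A C) % 2 := by
  rw [nInv, symmDiff_product_right, filter_symmDiff', card_symmDiff_parity']
  rfl

end

/-- For a commutative ring `R`, a linearly ordered set `M`, `q : M → R`,
and finite subsets `H J : Finset M`, let
`σ H J = (-1)^{#{(i,j) ∈ H × J : j < i}} * ∏ i ∈ H ∩ J, q i` in `R`. Then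
`σ H J * σ (H ∆ J) K = σ H (J ∆ K) * σ J K`. -/
theorem sigma_cocycle {R : Type*} [CommRing R] {M : Type*} [LinearOrder M]
    (q : M → R)
    (σ : Finset M → Finset M → R)
    (hσ : ∀ H J : Finset M,
      σ H J = (-1 : R) ^ ((H ×ˢ J).filter (fun p => p.2 < p.1)).card * ∏ i ∈ H ∩ J, q i)
    (H J K : Finset M) :
    σ H J * σ (symmDiff H J) K = σ H (symmDiff J K) * σ J K := by
  simp only [hσ, nInv_def]
  have hsign : (-1 : R) ^ nInv H J * (-1) ^ nInv (symmDiff H J) K =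
      (-1) ^ nInv H (symmDiff J K) * (-1) ^ nInv J K := by
    rw [← pow_add, ← pow_add]
    apply neg_one_pow_parity'
    have h1 := nInv_symmDiff_left H J K
    have h2 := nInv_symmDiff_right H J K
    omega
  have hprod : (∏ i ∈ H ∩ J, q i) * ∏ i ∈ (symmDiff H J) ∩ K, q i =
      (∏ i ∈ H ∩ (symmDiff J K), q i) * ∏ i ∈ J ∩ K, q i := by
    rw [← Finset.prod_union, ← Finset.prod_union]
    · congr 1
      ext x
      simp [Finset.mem_symmDiff]
      tauto
    · rw [Finset.disjoint_left]
      intro x hx hx'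
      simp [Finset.mem_symmDiff] at hx hx'
      tauto
    · rw [Finset.disjoint_left]
      intro x hx hx'
      simp [Finset.mem_symmDiff] at hx hx'
      tauto
  calc (-1 : R) ^ nInv H J * (∏ i ∈ H ∩ J, q i) *
        ((-1) ^ nInv (symmDiff H J) K * ∏ i ∈ (symmDiff H J) ∩ K, q i)
      = ((-1 : R) ^ nInv H J * (-1) ^ nInv (symmDiff H J) K) *
        ((∏ i ∈ H ∩ J, q i) * ∏ i ∈ (symmDiff H J) ∩ K, q i) := by ring
    _ = ((-1 : R) ^ nInv H (symmDiff J K) * (-1) ^ nInv J K) *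
        ((∏ i ∈ H ∩ (symmDiff J K), q i) * ∏ i ∈ J ∩ K, q i) := by rw [hsign, hprod]
    _ = _ := by ring
end

section
/- Let V be a vector space over a field K and let x₁, x₂, …, x_p ∈ V. Then the family (x₁, …, x_p) is linearly independent if and only if the exterior product ι(x₁) ∧ ι(x₂) ∧ ⋯ ∧ ι(x_p) is nonzero in the exterior algebra Λ(V). -/
/-- Vectors `x₁, …, x_p` in a vector space `V` over a field `K` are
linearly independent iff `ι x₁ ∧ ι x₂ ∧ ⋯ ∧ ι x_p ≠ 0` in the exterior algebra. -/
theorem linearIndependent_iff_exterior_prod_ne_zero {K : Type*} [Field K]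
    {V : Type*} [AddCommGroup V] [Module K V] {p : ℕ} (x : Fin p → V) :
    LinearIndependent K x ↔
      (List.ofFn fun i : Fin p => ExteriorAlgebra.ι K (x i)).prod ≠ 0 := by
  rw [← ExteriorAlgebra.ιMulti_apply]
  constructor
  · intro hx hzero
    -- build a projection onto the span followed by coordinates
    obtain ⟨q, hq⟩ := Submodule.exists_isCompl (Submodule.span K (Set.range x))
    let π := Submodule.linearProjOfIsCompl _ _ hq
    let g : V →ₗ[K] (Fin p → K) :=
      { toFun := fun v i => hx.repr (π v) i
        map_add' := by intro a b; ext i; simp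
        map_smul' := by intro c a; ext i; simp }
    have hg : ∀ i, g (x i) = fun j => if i = j then 1 else 0 := by
      intro i
      have h1 : π (x i) = ⟨x i, Submodule.subset_span ⟨i, rfl⟩⟩ := by
        exact Submodule.linearProjOfIsCompl_apply_left hq
          ⟨x i, Submodule.subset_span ⟨i, rfl⟩⟩
      funext j
      show hx.repr (π (x i)) j = _
      rw [h1]
      have := hx.repr_eq_single i ⟨x i, Submodule.subset_span ⟨i, rfl⟩⟩ rfl
      rw [this, Finsupp.single_apply]
    let f : V [⋀^Fin p]→ₗ[K] K := (Matrix.detRowAlternating).compLinearMap g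
    have hfx : f x = 1 := by
      show Matrix.det (Matrix.of fun i => g (x i)) = 1
      have : (Matrix.of fun i => g (x i)) = (1 : Matrix (Fin p) (Fin p) K) := by
        ext i j
        rw [Matrix.one_apply]
        simp [hg i]
      rw [this, Matrix.det_one]
    let F : ∀ i, V [⋀^Fin i]→ₗ[K] K :=
      Function.update (fun i => (0 : V [⋀^Fin i]→ₗ[K] K)) p f
    have := ExteriorAlgebra.liftAlternating_apply_ιMulti F x
    rw [hzero, map_zero] at this
    have hF : F p = f := Function.update_self _ _ _
    rw [hF, hfx] at this
    exact one_ne_zero this.symm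
  · intro h
    contrapose! h
    exact (ExteriorAlgebra.ιMulti K p).map_linearDependent x h
end

section
/- Let R be a commutative ring in which 2 is invertible, V an R-module, and Q a quadratic form on V. Let Φ : Cl(Q) → Λ(V) be the canonical module isomorphism between the Clifford algebra of Q and the exterior algebra of V that fixes V (i.e. Φ(ι_Q(x)) = ι_Λ(x) for all x ∈ V). If x₁, …, x_p ∈ V are pairwise orthogonal with respect to the polar form of Q (i.e. Q(x_i + x_j) - Q(x_i) - Q(x_j) = 0 for all i ≠ j), then Φ(ι_Q(x₁)·ι_Q(x₂)⋯ι_Q(x_p)) = ι_Λ(x₁) ∧ ι_Λ(x₂) ∧ ⋯ ∧ ι_Λ(x_p); that is, the Clifford product of pairwise orthogonal vectors corresponds to their exterior product. -/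
open CliffordAlgebra in
lemma contractLeft_ofFn_prod_eq_zero {R : Type*} [CommRing R]
    {V : Type*} [AddCommGroup V] [Module R V] (d : Module.Dual R V)
    {n : ℕ} (y : Fin n → V) (hd : ∀ i, d (y i) = 0) :
    contractLeft (Q := (0 : QuadraticForm R V)) d
      ((List.ofFn fun i => CliffordAlgebra.ι (0 : QuadraticForm R V) (y i)).prod) = 0 := by
  induction n with
  | zero => simp [contractLeft_one]
  | succ n ih =>
    rw [List.ofFn_succ, List.prod_cons, contractLeft_ι_mul, hd,
      ih (fun i => y i.succ) (fun i => hd i.succ), zero_smul, mul_zero, sub_zero]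

/-- Let `2` be invertible in `R` and let
`Φ = CliffordAlgebra.equivExterior Q : Cl(Q) ≃ₗ[R] Λ(V)` be the canonical module
isomorphism fixing `V`. If `x₁, …, x_p` are pairwise orthogonal for the polar form of
`Q`, then `Φ (ι_Q x₁ ⋯ ι_Q x_p) = ι_Λ x₁ ∧ ⋯ ∧ ι_Λ x_p`. -/
theorem clifford_prod_orthogonal_eq_exterior_prod {R : Type*} [CommRing R]
    [Invertible (2 : R)] {V : Type*} [AddCommGroup V] [Module R V]
    (Q : QuadraticForm R V) {p : ℕ} (x : Fin p → V)
    (hortho : ∀ i j : Fin p, i ≠ j → Q (x i + x j) - Q (x i) - Q (x j) = 0) :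
    CliffordAlgebra.equivExterior Q
        ((List.ofFn fun i : Fin p => CliffordAlgebra.ι Q (x i)).prod) =
      (List.ofFn fun i : Fin p => ExteriorAlgebra.ι R (x i)).prod := by
  induction p with
  | zero => simp [CliffordAlgebra.equivExterior]
  | succ n ih =>
    rw [List.ofFn_succ, List.prod_cons, List.ofFn_succ, List.prod_cons]
    show CliffordAlgebra.changeForm (CliffordAlgebra.changeForm.associated_neg_proof) _ = _
    rw [CliffordAlgebra.changeForm_ι_mul]
    have hih := ih (fun i => x i.succ) (fun i j hij => hortho i.succ j.succ (by
      simpa [Fin.succ_inj] using hij))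
    change CliffordAlgebra.changeForm (CliffordAlgebra.changeForm.associated_neg_proof) _ = _ at hih
    rw [hih]
    have hz : CliffordAlgebra.contractLeft (Q := (0 : QuadraticForm R V))
        (QuadraticMap.associated (R := R) (-Q) (x 0))
        ((List.ofFn fun i : Fin n =>
          CliffordAlgebra.ι (0 : QuadraticForm R V) (x i.succ)).prod) = 0 := by
      refine contractLeft_ofFn_prod_eq_zero _ _ fun i => ?_
      have := hortho 0 i.succ (Fin.succ_ne_zero i).symm
      rw [QuadraticMap.associated_apply]
      simp only [QuadraticMap.neg_apply]
      rw [show -Q (x 0 + x i.succ) - -Q (x 0) - -Q (x i.succ)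
        = -(Q (x 0 + x i.succ) - Q (x 0) - Q (x i.succ)) by ring, this, neg_zero, smul_zero]
    rw [hz, sub_zero]
end
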